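/- For all n ≥ 0 and 0 ≤ k ≤ n, the number of walks on the slit plane of length 2n+1 that end at (1,0) and use exactly 2k vertical steps (steps (0,1) or (0,−1)) equals binom(2n, 2k) · 2^{2k} · C_{n−k}, where Cₘ = binom(2m,m)/(m+1) is the m-th Catalan number. In particular ∑_{k=0}^{n} binom(2n,2k) · 2^{2k} · C_{n−k} = C_{2n+1}. -/

import Mathlib

open Filter

/-- The forbidden half-line `H = {(k,0) : k ≤ 0}`. -/
def slitH : Set (ℤ × ℤ) := {p : ℤ × ℤ | p.2 = 0 ∧ p.1 ≤ 0}

/-- The four steps of the ordinary square lattice. -/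
def sqSteps : Set (ℤ × ℤ) := {(1,0), (-1,0), (0,1), (0,-1)}

/-- The four diagonal steps. -/
def diagSteps : Set (ℤ × ℤ) := {(1,1), (1,-1), (-1,1), (-1,-1)}

/-- `w : Fin (n+1) → ℤ × ℤ` is a walk on the slit plane with steps in `A`. -/
def IsSlitWalk (A : Set (ℤ × ℤ)) (n : ℕ) (w : Fin (n+1) → ℤ × ℤ) : Prop :=
  w 0 = (0,0) ∧ (∀ m : Fin n, w m.succ - w m.castSucc ∈ A) ∧
    ∀ m : Fin (n+1), 1 ≤ (m : ℕ) → w m ∉ slitH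

/-- `a_{i,j}(n)`: the number of walks on the slit plane of length `n` ending at `(i,j)`. -/
noncomputable def slitCount (A : Set (ℤ × ℤ)) (i j : ℤ) (n : ℕ) : ℕ :=
  Nat.card {w : Fin (n+1) → ℤ × ℤ // IsSlitWalk A n w ∧ w (Fin.last n) = (i, j)}
/-- The number of walks on the slit plane of length `n` ending at `(i,j)` and using
exactly `v` vertical steps (steps with zero horizontal displacement). -/
noncomputable def slitCountVert (A : Set (ℤ × ℤ)) (i j : ℤ) (n v : ℕ) : ℕ :=
  Nat.card {w : Fin (n+1) → ℤ × ℤ // IsSlitWalk A n w ∧ w (Fin.last n) = (i, j)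
    ∧ (Finset.univ.filter
        (fun m : Fin n => (w m.succ - w m.castSucc).1 = 0)).card = v}


namespace SlitAux

inductive Stp : Type where
  | E | W | N | S
deriving DecidableEq

instance : Fintype Stp where
  elems := {Stp.E, Stp.W, Stp.N, Stp.S}
  complete := by intro x; cases x <;> simp

open Stp

def dx : Stp → ℤ | E => 1 | W => -1 | N => 0 | S => 0
def dy : Stp → ℤ | E => 0 | W => 0 | N => 1 | S => -1
def fl : Stp → Stp | E => E | W => W | N => S | S => N

@[simp] lemma fl_fl (s : Stp) : fl (fl s) = s := by cases s <;> rfl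
@[simp] lemma dx_fl (s : Stp) : dx (fl s) = dx s := by cases s <;> rfl
@[simp] lemma dy_fl (s : Stp) : dy (fl s) = - dy s := by cases s <;> rfl

variable {L : ℕ}

/-- extension of a word by a flipped copy (and junk beyond `2L`). -/
def ext (u : Fin L → Stp) (t : ℕ) : Stp :=
  if h : t < L then u ⟨t, h⟩ else if h2 : t - L < L then fl (u ⟨t - L, h2⟩) else E

lemma ext_lt (u : Fin L → Stp) {t : ℕ} (h : t < L) : ext u t = u ⟨t, h⟩ := by
  simp [ext, h]

lemma ext_ge (u : Fin L → Stp) {t : ℕ} (h1 : L ≤ t) (h2 : t - L < L) :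
    ext u t = fl (u ⟨t - L, h2⟩) := by
  simp [ext, Nat.not_lt.2 h1, h2]

/-- prefix sums -/
def X (u : Fin L → Stp) (t : ℕ) : ℤ := ∑ s ∈ Finset.range t, dx (ext u s)
def Y (u : Fin L → Stp) (t : ℕ) : ℤ := ∑ s ∈ Finset.range t, dy (ext u s)

@[simp] lemma X_zero (u : Fin L → Stp) : X u 0 = 0 := rfl
@[simp] lemma Y_zero (u : Fin L → Stp) : Y u 0 = 0 := rfl
lemma X_succ (u : Fin L → Stp) (t : ℕ) : X u (t+1) = X u t + dx (ext u t) :=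
  Finset.sum_range_succ _ _
lemma Y_succ (u : Fin L → Stp) (t : ℕ) : Y u (t+1) = Y u t + dy (ext u t) :=
  Finset.sum_range_succ _ _

/-- rotation with wrap-flip -/
def rot (i : ℕ) (u : Fin L → Stp) : Fin L → Stp := fun s => ext u (i + s.val)

lemma X_rot (u : Fin L → Stp) (i : ℕ) : ∀ t, t ≤ L → X (rot i u) t = X u (i + t) - X u i := by
  intro t ht
  induction t with
  | zero => simp
  | succ t ih =>
    have ht' : t ≤ L := Nat.le_of_succ_le ht
    have htL : t < L := ht
    rw [X_succ, ih ht', ext_lt (rot i u) htL, rot, show i + (t+1) = (i+t)+1 by ring, X_succ]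
    ring_nf
lemma Y_rot (u : Fin L → Stp) (i : ℕ) : ∀ t, t ≤ L → Y (rot i u) t = Y u (i + t) - Y u i := by
  intro t ht
  induction t with
  | zero => simp
  | succ t ih =>
    have ht' : t ≤ L := Nat.le_of_succ_le ht
    have htL : t < L := ht
    rw [Y_succ, ih ht', ext_lt (rot i u) htL, rot, show i + (t+1) = (i+t)+1 by ring, Y_succ]
    ring_nf

lemma X_add_L (u : Fin L → Stp) : ∀ t, t ≤ L → X u (L + t) = X u L + X u t := by
  intro t ht
  induction t with
  | zero => simp
  | succ t ih =>
    have ht' : t ≤ L := Nat.le_of_succ_le ht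
    have htL : t < L := ht
    rw [Nat.add_succ, X_succ, ih ht', X_succ,
      ext_ge u (Nat.le_add_right L t) (by simpa using htL), ext_lt u htL]
    simp [add_assoc]
lemma Y_add_L (u : Fin L → Stp) : ∀ t, t ≤ L → Y u (L + t) = Y u L - Y u t := by
  intro t ht
  induction t with
  | zero => simp
  | succ t ih =>
    have ht' : t ≤ L := Nat.le_of_succ_le ht
    have htL : t < L := ht
    rw [Nat.add_succ, Y_succ, ih ht', Y_succ,
      ext_ge u (Nat.le_add_right L t) (by simpa using htL), ext_lt u htL]
    simp; ring

/-- a word is a slit walk ending at (1,0) -/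
def SlitW (u : Fin L → Stp) : Prop :=
  X u L = 1 ∧ Y u L = 0 ∧ ∀ t, 1 ≤ t → t ≤ L → ¬(Y u t = 0 ∧ X u t ≤ 0)

end SlitAux

namespace SlitAux
open Stp
variable {L : ℕ}

/-- discrete intermediate value -/
lemma ivt (f : ℕ → ℤ) (hstep : ∀ t, f (t+1) ≤ f t + 1) (N : ℕ) (m : ℤ)
    (h0 : f 0 ≤ m) (hN : m ≤ f N) : ∃ t, t ≤ N ∧ f t = m := by
  induction N with
  | zero => exact ⟨0, le_refl 0, le_antisymm h0 hN⟩
  | succ N ih =>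
    by_cases hc : m ≤ f N
    · obtain ⟨t, ht, he⟩ := ih hc
      exact ⟨t, Nat.le_succ_of_le ht, he⟩
    · push_neg at hc
      refine ⟨N + 1, le_refl _, le_antisymm ?_ hN⟩
      have := hstep N
      omega

lemma parity (u : Fin L → Stp) : ∀ t, Even (X u t + Y u t + t) := by
  intro t
  induction t with
  | zero => simp
  | succ t ih =>
    rw [X_succ, Y_succ]
    have h : Even (dx (ext u t) + dy (ext u t) + 1) := by
      cases ext u t <;> decide
    rw [show X u t + dx (ext u t) + (Y u t + dy (ext u t)) + ((t+1 : ℕ) : ℤ)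
        = X u t + Y u t + t + (dx (ext u t) + dy (ext u t) + 1) by push_cast; ring]
    exact ih.add h

lemma abs_step_X (u : Fin L → Stp) (t : ℕ) : X u (t+1) ≤ X u t + 1 ∧ X u t - 1 ≤ X u (t+1) := by
  rw [X_succ]; rcases (by cases ext u t <;> simp [dx] : dx (ext u t) = 1 ∨ dx (ext u t) = -1 ∨ dx (ext u t) = 0) with h | h | h <;> omega

lemma abs_step_Y (u : Fin L → Stp) (t : ℕ) : Y u (t+1) ≤ Y u t + 1 ∧ Y u t - 1 ≤ Y u (t+1) := by
  rw [Y_succ]; rcases (by cases ext u t <;> simp [dy] : dy (ext u t) = 1 ∨ dy (ext u t) = -1 ∨ dy (ext u t) = 0) with h | h | h <;> omega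

/-- the characterization of slit rotations -/
lemma slitW_rot_iff (u : Fin L → Stp) (hX : X u L = 1) {h : ℤ} (hh : Y u L = h + h)
    {i : ℕ} (hi : i < L) :
    SlitW (rot i u) ↔ (Y u i = h ∧
      ∀ t, i < t → t ≤ i + L → ¬(Y u t = Y u i ∧ X u t ≤ X u i)) := by
  have hiL : i ≤ L := le_of_lt hi
  have hXi : ∀ t, t ≤ L → X (rot i u) t = X u (i + t) - X u i := X_rot u i
  have hYi : ∀ t, t ≤ L → Y (rot i u) t = Y u (i + t) - Y u i := Y_rot u i
  have hXiL : X u (i + L) = 1 + X u i := by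
    rw [Nat.add_comm i L, X_add_L u i hiL, hX]
  have hYiL : Y u (i + L) = (h + h) - Y u i := by
    rw [Nat.add_comm i L, Y_add_L u i hiL, hh]
  constructor
  · rintro ⟨-, hY0, havoid⟩
    have hYi' : Y u i = h := by
      rw [hYi L (le_refl L), hYiL] at hY0
      linarith
    refine ⟨hYi', fun t hti htiL hbad => ?_⟩
    have hs1 : 1 ≤ t - i := by omega
    have hs2 : t - i ≤ L := by omega
    refine havoid (t - i) hs1 hs2 ⟨?_, ?_⟩
    · rw [hYi _ hs2, show i + (t - i) = t by omega]; linarith [hbad.1]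
    · rw [hXi _ hs2, show i + (t - i) = t by omega]; linarith [hbad.2]
  · rintro ⟨hYh, hcond⟩
    refine ⟨?_, ?_, ?_⟩
    · rw [hXi L (le_refl L), hXiL]; ring
    · rw [hYi L (le_refl L), hYiL, hYh]; ring
    · intro s hs1 hs2 hbad
      rw [hYi s hs2, hXi s hs2] at hbad
      exact hcond (i + s) (by omega) (by omega) ⟨by linarith [hbad.1], by linarith [hbad.2]⟩

/-- Core lemma: exactly one rotation-with-flip is a slit walk ending at (1,0). -/
theorem core (hL : 0 < L) (u : Fin L → Stp) (hX : X u L = 1) (hE : Even (Y u L)) :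
    ∃! i : Fin L, SlitW (rot i.val u) := by
  obtain ⟨h, hh⟩ := hE
  -- candidates
  set C : Finset ℕ := (Finset.range L).filter (fun t => Y u t = h) with hC
  have hCmem : ∀ {t}, t ∈ C ↔ (t < L ∧ Y u t = h) := by
    intro t; simp [hC, Finset.mem_filter, Finset.mem_range]
  have hCne : C.Nonempty := by
    rcases lt_trichotomy h 0 with hneg | hzero | hpos
    · -- apply ivt to -Y
      obtain ⟨t, htL, hte⟩ := ivt (fun t => - Y u t)
        (fun t => by show - Y u (t+1) ≤ - Y u t + 1; have := abs_step_Y u t; omega) L (-h)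
        (by show -Y u 0 ≤ -h; simp; omega) (by show -h ≤ -Y u L; simp [hh]; omega)
      have htL' : t < L := by
        rcases Nat.lt_or_ge t L with h' | h'
        · exact h'
        · exfalso
          have hte' : - Y u t = -h := hte
          have heq : t = L := le_antisymm htL h'
          rw [heq] at hte'
          omega
      exact ⟨t, hCmem.2 ⟨htL', by omega⟩⟩
    · exact ⟨0, hCmem.2 ⟨hL, by simp [hzero]⟩⟩
    · obtain ⟨t, htL, hte⟩ := ivt (fun t => Y u t)
        (fun t => by show Y u (t+1) ≤ Y u t + 1; have := abs_step_Y u t; omega) L h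
        (by show Y u 0 ≤ h; simp; omega) (by show h ≤ Y u L; simp [hh]; omega)
      have htL' : t < L := by
        rcases Nat.lt_or_ge t L with h' | h'
        · exact h'
        · exfalso
          have hte' : Y u t = h := hte
          have heq : t = L := le_antisymm htL h'
          rw [heq] at hte'
          omega
      exact ⟨t, hCmem.2 ⟨htL', hte⟩⟩
  have hCXne : (C.image (X u)).Nonempty := hCne.image _
  set m0 : ℤ := (C.image (X u)).min' hCXne with hm0
  have hm0le : ∀ t ∈ C, m0 ≤ X u t := fun t ht =>
    Finset.min'_le _ _ (Finset.mem_image_of_mem _ ht)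
  obtain ⟨t0, ht0C, ht0X⟩ : ∃ t ∈ C, X u t = m0 := by
    obtain ⟨x, hx⟩ := Finset.mem_image.1 ((C.image (X u)).min'_mem hCXne)
    exact ⟨x, hx.1, hx.2⟩
  set D : Finset ℕ := C.filter (fun t => X u t = m0) with hD
  have hDne : D.Nonempty := ⟨t0, Finset.mem_filter.2 ⟨ht0C, ht0X⟩⟩
  set d : ℕ := D.max' hDne with hd
  have hdD : d ∈ D := D.max'_mem hDne
  have hdC : d ∈ C := (Finset.mem_filter.1 hdD).1
  have hdX : X u d = m0 := (Finset.mem_filter.1 hdD).2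
  have hdlast : ∀ t ∈ C, X u t = m0 → t ≤ d := fun t ht hx =>
    D.le_max' t (Finset.mem_filter.2 ⟨ht, hx⟩)
  have hdL : d < L := (hCmem.1 hdC).1
  have hdY : Y u d = h := (hCmem.1 hdC).2
  -- key facts about levels beyond L
  have hYbig : ∀ t, L ≤ t → t ≤ 2*L → Y u t = (h + h) - Y u (t - L) := by
    intro t h1 h2
    have h3 : L + (t - L) = t := by omega
    calc Y u t = Y u (L + (t - L)) := by rw [h3]
    _ = Y u L - Y u (t - L) := Y_add_L u (t - L) (by omega)
    _ = (h + h) - Y u (t - L) := by rw [hh]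
  have hXbig : ∀ t, L ≤ t → t ≤ 2*L → X u t = 1 + X u (t - L) := by
    intro t h1 h2
    have h3 : L + (t - L) = t := by omega
    calc X u t = X u (L + (t - L)) := by rw [h3]
    _ = X u L + X u (t - L) := X_add_L u (t - L) (by omega)
    _ = 1 + X u (t - L) := by rw [hX]
  refine ⟨⟨d, hdL⟩, ?_, ?_⟩
  · -- existence
    show SlitW (rot d u)
    rw [slitW_rot_iff u hX hh hdL]
    refine ⟨hdY, fun t hdt htL hbad => ?_⟩
    rw [hdY] at hbad
    rcases Nat.lt_or_ge t L with htlt | htge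
    · -- t < L : t ∈ C beyond d
      have htC : t ∈ C := hCmem.2 ⟨htlt, hbad.1⟩
      have : m0 ≤ X u t := hm0le t htC
      rcases eq_or_lt_of_le this with he | hlt
      · exact absurd (hdlast t htC he.symm) (by omega)
      · omega
    · rcases Nat.lt_or_ge L t with hLt | hLt
      · -- t > L
        have ht2 : t ≤ 2*L := by omega
        have hYt := hYbig t htge ht2
        have hXt := hXbig t htge ht2
        have htC : t - L ∈ C := hCmem.2 ⟨by omega, by omega⟩
        have := hm0le (t - L) htC
        omega
      · -- t = L
        have : t = L := by omega
        subst this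
        have hzero : h = 0 := by omega
        have h0C : (0:ℕ) ∈ C := hCmem.2 ⟨hL, by simp [hzero]⟩
        have := hm0le 0 h0C
        simp at this
        omega
  · -- uniqueness
    rintro ⟨i, hiL⟩ hgood
    have hgood' : SlitW (rot i u) := hgood
    rw [slitW_rot_iff u hX hh hiL] at hgood'
    obtain ⟨hYi, hcond⟩ := hgood'
    have hiC : i ∈ C := hCmem.2 ⟨hiL, hYi⟩
    -- X u i is the min over C and i is the last achiever
    have hgt : ∀ t ∈ C, i < t → X u i < X u t := by
      intro t htC hit
      by_contra hle
      push_neg at hle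
      exact hcond t hit (by have := (hCmem.1 htC).1; omega)
        ⟨by rw [hYi]; exact (hCmem.1 htC).2, hle⟩
    have hge : ∀ t ∈ C, t ≤ i → X u i ≤ X u t := by
      intro t htC hti
      have htL : t < L := (hCmem.1 htC).1
      by_contra hle
      push_neg at hle
      have h1 : i < t + L := by omega
      have h2 : t + L ≤ i + L := by omega
      refine hcond (t + L) h1 h2 ⟨?_, ?_⟩
      · rw [hYbig (t+L) (by omega) (by omega)]
        simp only [Nat.add_sub_cancel]
        rw [(hCmem.1 htC).2, hYi]
        ring
      · rw [hXbig (t+L) (by omega) (by omega)]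
        simp only [Nat.add_sub_cancel]
        omega
    have hXim0 : X u i = m0 := by
      have h1 : m0 ≤ X u i := hm0le i hiC
      rcases Nat.lt_or_ge i t0 with hc | hc
      · have := hgt t0 ht0C hc; omega
      · have := hge t0 ht0C hc; omega
    have hid : i ≤ d := hdlast i hiC hXim0
    rcases eq_or_lt_of_le hid with he | hlt
    · exact Fin.ext he
    · exfalso
      have := hgt d hdC hlt
      omega

end SlitAux

namespace SlitAux
open Stp Finset
variable {L : ℕ}

/-- number of vertical letters -/
def vc (u : Fin L → Stp) : ℕ := (Finset.univ.filter (fun t => dx (u t) = 0)).card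

lemma X_L_eq (u : Fin L → Stp) : X u L = ∑ t : Fin L, dx (u t) := by
  rw [X, ← Fin.sum_univ_eq_sum_range (fun s => dx (ext u s)) L]
  refine Finset.sum_congr rfl (fun t _ => ?_)
  rw [ext_lt u t.isLt]

lemma vc_eq_sum (u : Fin L → Stp) : (vc u : ℕ) = ∑ t : Fin L, (if dx (u t) = 0 then 1 else 0) :=
  Finset.card_filter _ _

section trans
variable [NeZero L]

lemma rot_eq_comp {α : Type*} (g : Stp → α) (hg : ∀ s, g (fl s) = g s)
    (i : Fin L) (u : Fin L → Stp) (t : Fin L) :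
    g (rot i.val u t) = g (u (i + t)) := by
  have hL : 0 < L := Nat.pos_of_ne_zero (NeZero.ne L)
  have hval : (i + t).val = (i.val + t.val) % L := by
    rw [Fin.add_def]
  rcases Nat.lt_or_ge (i.val + t.val) L with h | h
  · rw [rot, ext_lt u h]
    have hidx : (⟨i.val + t.val, h⟩ : Fin L) = i + t := by
      apply Fin.ext
      rw [hval, Nat.mod_eq_of_lt h]
    rw [hidx]
  · have h2 : i.val + t.val - L < L := by
      have := i.isLt; have := t.isLt; omega
    rw [rot, ext_ge u h h2, hg]
    have hidx : (⟨i.val + t.val - L, h2⟩ : Fin L) = i + t := by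
      apply Fin.ext
      rw [hval, Nat.mod_eq_sub_mod h, Nat.mod_eq_of_lt h2]
    rw [hidx]

/-- inverse rotation with flip on the initial segment -/
def unrot (j : Fin L) (w : Fin L → Stp) : Fin L → Stp := fun t =>
  if h : j.val ≤ t.val then w ⟨t.val - j.val, by have := t.isLt; omega⟩
  else fl (w ⟨t.val + L - j.val, by have := t.isLt; have := j.isLt; omega⟩)

lemma unrot_eq_comp {α : Type*} (g : Stp → α) (hg : ∀ s, g (fl s) = g s)
    (j : Fin L) (w : Fin L → Stp) (t : Fin L) :
    g (unrot j w t) = g (w (t - j)) := by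
  have hval : (t - j).val = (L - j.val + t.val) % L := by
    rw [Fin.sub_def]
  have hj := j.isLt; have ht := t.isLt
  rcases Nat.lt_or_ge t.val j.val with h | h
  · rw [unrot, dif_neg (by omega), hg]
    have hidx : (⟨t.val + L - j.val, by omega⟩ : Fin L) = t - j := by
      apply Fin.ext
      dsimp only
      rw [hval, Nat.mod_eq_of_lt (by omega)]
      omega
    rw [hidx]
  · rw [unrot, dif_pos h]
    have hidx : (⟨t.val - j.val, by omega⟩ : Fin L) = t - j := by
      apply Fin.ext
      dsimp only
      rw [hval, Nat.mod_eq_sub_mod (by omega), Nat.mod_eq_of_lt (by omega)]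
      omega
    rw [hidx]

lemma rot_unrot (j : Fin L) (w : Fin L → Stp) : rot j.val (unrot j w) = w := by
  have hj := j.isLt
  funext s
  have hs := s.isLt
  rcases Nat.lt_or_ge (j.val + s.val) L with h | h
  · rw [rot, ext_lt _ h, unrot, dif_pos (by dsimp only; omega)]
    congr 1
    apply Fin.ext
    dsimp only
    omega
  · have h2 : j.val + s.val - L < L := by omega
    rw [rot, ext_ge _ h h2, unrot, dif_neg (by dsimp only; omega), fl_fl]
    congr 1
    apply Fin.ext
    dsimp only
    omega

lemma unrot_rot (i : Fin L) (u : Fin L → Stp) : unrot i (rot i.val u) = u := by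
  have hi := i.isLt
  funext t
  have ht := t.isLt
  rcases Nat.lt_or_ge t.val i.val with h | h
  · rw [unrot, dif_neg (by omega), rot, ext_ge _ (by dsimp only; omega) (by dsimp only; omega), fl_fl]
    congr 1
    apply Fin.ext
    dsimp only
    omega
  · rw [unrot, dif_pos h, rot, ext_lt _ (by omega : i.val + (t.val - i.val) < L)]
    congr 1
    apply Fin.ext
    dsimp only
    omega

lemma sum_rot {M : Type*} [AddCommMonoid M] (g : Stp → M) (hg : ∀ s, g (fl s) = g s)
    (i : Fin L) (u : Fin L → Stp) : ∑ t : Fin L, g (rot i.val u t) = ∑ t : Fin L, g (u t) := by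
  calc ∑ t : Fin L, g (rot i.val u t) = ∑ t : Fin L, g (u ((Equiv.addLeft i) t)) :=
        Finset.sum_congr rfl (fun t _ => rot_eq_comp g hg i u t)
  _ = ∑ t : Fin L, g (u t) := Fintype.sum_equiv (Equiv.addLeft i) _ _ (fun t => rfl)

lemma sum_unrot {M : Type*} [AddCommMonoid M] (g : Stp → M) (hg : ∀ s, g (fl s) = g s)
    (j : Fin L) (w : Fin L → Stp) : ∑ t : Fin L, g (unrot j w t) = ∑ t : Fin L, g (w t) := by
  calc ∑ t : Fin L, g (unrot j w t) = ∑ t : Fin L, g (w ((Equiv.subRight j) t)) :=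
        Finset.sum_congr rfl (fun t _ => unrot_eq_comp g hg j w t)
  _ = ∑ t : Fin L, g (w t) := Fintype.sum_equiv (Equiv.subRight j) _ _ (fun t => rfl)

lemma vc_rot (i : Fin L) (u : Fin L → Stp) : vc (rot i.val u) = vc u := by
  rw [vc_eq_sum, vc_eq_sum]
  exact sum_rot (fun s => if dx s = 0 then (1:ℕ) else 0) (fun s => by cases s <;> rfl) i u

lemma vc_unrot (j : Fin L) (w : Fin L → Stp) : vc (unrot j w) = vc w := by
  rw [vc_eq_sum, vc_eq_sum]
  exact sum_unrot (fun s => if dx s = 0 then (1:ℕ) else 0) (fun s => by cases s <;> rfl) j w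

lemma X_L_rot (i : Fin L) (u : Fin L → Stp) : X (rot i.val u) L = X u L := by
  rw [X_L_eq, X_L_eq]
  exact sum_rot dx dx_fl i u

lemma X_L_unrot (j : Fin L) (w : Fin L → Stp) : X (unrot j w) L = X w L := by
  rw [X_L_eq, X_L_eq]
  exact sum_unrot dx dx_fl j w

end trans

lemma evenY (hO : Odd L) (u : Fin L → Stp) (hX : X u L = 1) : Even (Y u L) := by
  obtain ⟨k, hk⟩ := parity u L
  obtain ⟨m, hm⟩ := hO
  refine ⟨k - m - 1, ?_⟩
  rw [hX] at hk
  have hL' : (L : ℤ) = 2*(m:ℤ)+1 := by exact_mod_cast hm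
  rw [hL'] at hk
  linarith

section main
variable [NeZero L]

noncomputable def gIdx (u : Fin L → Stp) (hX : X u L = 1) (hO : Odd L) : Fin L :=
  (core (Nat.pos_of_ne_zero (NeZero.ne L)) u hX (evenY hO u hX)).exists.choose

lemma gIdx_spec (u : Fin L → Stp) (hX : X u L = 1) (hO : Odd L) :
    SlitW (rot (gIdx u hX hO).val u) :=
  (core (Nat.pos_of_ne_zero (NeZero.ne L)) u hX (evenY hO u hX)).exists.choose_spec

lemma gIdx_unique (u : Fin L → Stp) (hX : X u L = 1) (hO : Odd L)
    (j : Fin L) (hj : SlitW (rot j.val u)) : j = gIdx u hX hO := by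
  have h := core (Nat.pos_of_ne_zero (NeZero.ne L)) u hX (evenY hO u hX)
  exact h.unique hj (gIdx_spec u hX hO)

/-- The main bijection -/
noncomputable def mainEquiv (v : ℕ) (hO : Odd L) :
    {u : Fin L → Stp // X u L = 1 ∧ vc u = v} ≃
      {w : Fin L → Stp // SlitW w ∧ vc w = v} × Fin L where
  toFun p :=
    (⟨rot (gIdx p.1 p.2.1 hO).val p.1,
      gIdx_spec p.1 p.2.1 hO, by rw [vc_rot]; exact p.2.2⟩, gIdx p.1 p.2.1 hO)
  invFun q :=
    ⟨unrot q.2 q.1.1, by rw [X_L_unrot]; exact q.1.2.1.1, by rw [vc_unrot]; exact q.1.2.2⟩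
  left_inv p := by
    apply Subtype.ext
    simp only []
    rw [unrot_rot]
  right_inv q := by
    obtain ⟨⟨w, hw⟩, j⟩ := q
    have h1 : rot j.val (unrot j w) = w := rot_unrot j w
    have hX' : X (unrot j w) L = 1 := by rw [X_L_unrot]; exact hw.1.1
    have hju : j = gIdx (unrot j w) hX' hO := by
      apply gIdx_unique
      rw [h1]; exact hw.1
    have h2 : ∀ (i : Fin L), i = j → rot i.val (unrot j w) = w := fun i hi => hi ▸ h1
    refine Prod.ext ?_ ?_
    · apply Subtype.ext
      simp only []
      exact h2 _ hju.symm
    · simp only []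
      exact hju.symm
end main

end SlitAux

namespace SlitAux
open Stp Finset
variable {L : ℕ}

def dirZ (s : Stp) : ℤ × ℤ := (dx s, dy s)

def stpOf (z : ℤ × ℤ) : Stp :=
  if z = (1,0) then E else if z = (-1,0) then W else if z = (0,1) then N else S

lemma stpOf_dirZ (s : Stp) : stpOf (dirZ s) = s := by
  cases s <;> simp [stpOf, dirZ, dx, dy]

lemma dirZ_stpOf {z : ℤ × ℤ} (hz : z ∈ sqSteps) : dirZ (stpOf z) = z := by
  simp only [sqSteps, Set.mem_insert_iff, Set.mem_singleton_iff] at hz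
  rcases hz with h | h | h | h <;> subst h <;> simp [stpOf, dirZ, dx, dy]

lemma dirZ_mem (s : Stp) : dirZ s ∈ sqSteps := by
  cases s <;> simp [sqSteps, dirZ, dx, dy]

/-- the walk associated to a word -/
def wk (u : Fin L → Stp) : Fin (L+1) → ℤ × ℤ := fun t => (X u t.val, Y u t.val)

lemma wk_step (u : Fin L → Stp) (m : Fin L) :
    wk u m.succ - wk u m.castSucc = dirZ (u m) := by
  have h1 : (m.succ : Fin (L+1)).val = m.val + 1 := rfl
  have h2 : (m.castSucc : Fin (L+1)).val = m.val := rfl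
  have h3 : ext u m.val = u m := by rw [ext_lt u m.isLt]
  simp only [wk, h1, h2, X_succ, Y_succ, h3, dirZ, Prod.mk_sub_mk, Prod.mk.injEq]
  constructor <;> ring

/-- the word associated to a walk -/
def wd (w : Fin (L+1) → ℤ × ℤ) : Fin L → Stp := fun m => stpOf (w m.succ - w m.castSucc)

lemma wd_pre (w : Fin (L+1) → ℤ × ℤ) (h0 : w 0 = (0,0))
    (hstep : ∀ m : Fin L, w m.succ - w m.castSucc ∈ sqSteps) :
    ∀ t, (ht : t ≤ L) → (X (wd w) t, Y (wd w) t) = w ⟨t, by omega⟩ := by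
  intro t ht
  induction t with
  | zero => simpa using h0.symm
  | succ t ih =>
    have ht' : t ≤ L := Nat.le_of_succ_le ht
    have htL : t < L := ht
    have hm : ext (wd w) t = wd w ⟨t, htL⟩ := ext_lt _ htL
    set A : Fin (L+1) := ⟨t+1, by omega⟩ with hA
    set B : Fin (L+1) := ⟨t, by omega⟩ with hB
    have hd : dirZ (wd w ⟨t, htL⟩) = w A - w B := dirZ_stpOf (hstep ⟨t, htL⟩)
    have hxy : (X (wd w) (t+1), Y (wd w) (t+1))
        = (X (wd w) t, Y (wd w) t) + dirZ (wd w ⟨t, htL⟩) := by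
      rw [X_succ, Y_succ, hm]; rfl
    have hw : (X (wd w) t, Y (wd w) t) = w B := ih ht'
    show _ = w A
    rw [hxy, hw, hd]
    ring

/-- Bridge: the original walk subtype is equivalent to the word subtype. -/
noncomputable def bridgeEquiv (L v : ℕ) :
    {w : Fin (L+1) → ℤ × ℤ // IsSlitWalk sqSteps L w ∧ w (Fin.last L) = (1, 0)
      ∧ (Finset.univ.filter
          (fun m : Fin L => (w m.succ - w m.castSucc).1 = 0)).card = v} ≃
    {u : Fin L → Stp // SlitW u ∧ vc u = v} where
  toFun p := ⟨wd p.1, by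
    obtain ⟨h0, hstep, havoid⟩ := p.2.1
    have hend := p.2.2.1
    have hcount := p.2.2.2
    refine ⟨⟨?_, ?_, ?_⟩, ?_⟩
    · have h1 := wd_pre p.1 h0 hstep L (le_refl L)
      have h2 : p.1 ⟨L, by omega⟩ = (1, 0) := hend
      rw [h2] at h1
      exact congrArg Prod.fst h1
    · have h1 := wd_pre p.1 h0 hstep L (le_refl L)
      have h2 : p.1 ⟨L, by omega⟩ = (1, 0) := hend
      rw [h2] at h1
      exact congrArg Prod.snd h1
    · intro t ht1 htL hbad
      have hpre := wd_pre p.1 h0 hstep t htL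
      refine havoid ⟨t, by omega⟩ (by exact ht1) ?_
      rw [← hpre]
      exact ⟨hbad.1, hbad.2⟩
    · refine Eq.trans ?_ hcount
      show (Finset.univ.filter (fun m : Fin L => dx (wd p.1 m) = 0)).card = _
      apply Finset.card_bij (fun m _ => m) ?_ (fun a b _ _ h => h) (fun m hm => ⟨m, ?_, rfl⟩)
      · intro m hm
        simp only [Finset.mem_filter, Finset.mem_univ, true_and] at hm ⊢
        have h1 : dx (wd p.1 m) = (p.1 m.succ - p.1 m.castSucc).1 := by
          rw [← dirZ_stpOf (hstep m)]; rfl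
        rw [← h1]
        exact hm
      · simp only [Finset.mem_filter, Finset.mem_univ, true_and] at hm ⊢
        have h1 : dx (wd p.1 m) = (p.1 m.succ - p.1 m.castSucc).1 := by
          rw [← dirZ_stpOf (hstep m)]; rfl
        rw [h1]
        exact hm⟩
  invFun q := ⟨wk q.1, by
    obtain ⟨⟨hX, hY, havoid⟩, hvc⟩ := q.2
    refine ⟨⟨?_, ?_, ?_⟩, ?_, ?_⟩
    · show ((X q.1 0, Y q.1 0) : ℤ × ℤ) = (0,0)
      simp
    · intro m
      rw [wk_step]
      exact dirZ_mem (q.1 m)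
    · intro m hm hbad
      have hm2 : m.val ≤ L := by omega
      exact havoid m.val hm hm2 ⟨hbad.1, hbad.2⟩
    · show ((X q.1 L, Y q.1 L) : ℤ × ℤ) = (1, 0)
      rw [hX, hY]
    · refine Eq.trans ?_ hvc
      show _ = vc q.1
      rw [vc_eq_sum q.1, Finset.card_filter]
      refine Finset.sum_congr rfl (fun m _ => ?_)
      rw [wk_step]
      rfl⟩
  left_inv p := by
    apply Subtype.ext
    show wk (wd p.1) = p.1
    obtain ⟨h0, hstep, havoid⟩ := p.2.1
    funext t
    have h1 := wd_pre p.1 h0 hstep t.val (by omega)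
    have h2 : (⟨t.val, by omega⟩ : Fin (L+1)) = t := Fin.ext rfl
    rw [h2] at h1
    exact h1
  right_inv q := by
    apply Subtype.ext
    show wd (wk q.1) = q.1
    funext m
    show stpOf (wk q.1 m.succ - wk q.1 m.castSucc) = q.1 m
    rw [wk_step, stpOf_dirZ]

end SlitAux

namespace SlitAux
open Stp Finset
variable {L : ℕ}

def posb : Stp → Bool | E => true | N => true | W => false | S => false

def vertSet (u : Fin L → Stp) : Finset (Fin L) := Finset.univ.filter (fun t => dx (u t) = 0)

lemma vc_eq_vertSet_card (u : Fin L → Stp) : vc u = (vertSet u).card := rfl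

lemma card_boolfun (α : Type*) [Fintype α] [DecidableEq α] (e : ℕ) :
    Nat.card {f : α → Bool // (Finset.univ.filter (fun x => f x = true)).card = e}
      = (Fintype.card α).choose e := by
  have eqv : {f : α → Bool // (Finset.univ.filter (fun x => f x = true)).card = e}
      ≃ {s : Finset α // s.card = e} := by
    refine ⟨fun f => ⟨Finset.univ.filter (fun x => f.1 x = true), f.2⟩,
      fun s => ⟨fun x => decide (x ∈ s.1), ?_⟩, ?_, ?_⟩
    · have hfe : (Finset.univ.filter (fun x => decide (x ∈ s.1) = true)) = s.1 := by
        ext x; simp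
      rw [hfe]
      exact s.2
    · intro f
      apply Subtype.ext
      funext x
      by_cases h : f.1 x = true <;> simp [h]
    · intro s
      apply Subtype.ext
      ext x
      simp
  rw [Nat.card_congr eqv, Nat.card_eq_fintype_card, Fintype.card_finset_len]

lemma sum_ite_bool (T : Finset (Fin L)) (g : Fin L → Bool) :
    ∑ t ∈ T, (if g t = true then (1:ℤ) else -1)
      = 2 * ((T.filter (fun t => g t = true)).card : ℤ) - T.card := by
  have h1 : ∀ t ∈ T, (if g t = true then (1:ℤ) else -1)
      = 2 * (if g t = true then (1:ℤ) else 0) - 1 := by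
    intro t _
    by_cases h : g t = true <;> simp [h]
  rw [Finset.sum_congr rfl h1, Finset.sum_sub_distrib, ← Finset.mul_sum]
  have h2 : ∑ t ∈ T, (if g t = true then (1:ℤ) else 0)
      = ((T.filter (fun t => g t = true)).card : ℤ) := by
    rw [Finset.card_filter]
    push_cast
    rfl
  rw [h2]
  simp [mul_comm]

/-- decode a boolean function into a word, given the vertical positions -/
def dec (Sf : Finset (Fin L)) (f : Fin L → Bool) : Fin L → Stp := fun t =>
  if t ∈ Sf then (if f t then N else Stp.S) else (if f t then E else W)

lemma vertSet_dec (Sf : Finset (Fin L)) (f : Fin L → Bool) : vertSet (dec Sf f) = Sf := by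
  ext t
  rw [vertSet]; simp only [Finset.mem_filter, Finset.mem_univ, true_and]
  by_cases h : t ∈ Sf <;> by_cases hf : f t <;> simp [dec, h, hf, dx]

lemma card_fiber (v e : ℕ) (hve : L + 1 = v + 2*e) (Sf : Finset (Fin L)) (hS : Sf.card = v) :
    Nat.card {u : Fin L → Stp // (X u L = 1 ∧ vc u = v) ∧ vertSet u = Sf}
      = 2^v * (L - v).choose e := by
  have hvL : v ≤ L := by
    have := Finset.card_le_univ Sf
    rw [hS] at this
    simpa using this
  have hcompl : Sfᶜ.card = L - v := by
    rw [Finset.card_compl, hS]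
    simp
  have key : ∀ u : Fin L → Stp, vertSet u = Sf → (X u L = 1 ↔
      ((Sfᶜ.filter (fun t => posb (u t) = true)).card = e)) := by
    intro u hvs
    have hdx : ∀ t ∈ Sfᶜ, dx (u t) = (if posb (u t) = true then (1:ℤ) else -1) := by
      intro t ht
      have h1 : t ∉ Sf := Finset.mem_compl.1 ht
      rw [← hvs] at h1
      simp only [vertSet, Finset.mem_filter, Finset.mem_univ, true_and] at h1
      cases h : u t <;> simp [h, dx, posb] at h1 ⊢
    have hsplit : X u L = ∑ t ∈ Sfᶜ, dx (u t) := by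
      rw [X_L_eq]
      rw [← Finset.sum_filter_add_sum_filter_not Finset.univ (fun t => t ∈ Sf)
        (fun t => dx (u t))]
      have hz : ∑ t ∈ Finset.univ.filter (fun t => t ∈ Sf), dx (u t) = 0 := by
        apply Finset.sum_eq_zero
        intro t ht
        simp only [Finset.mem_filter, Finset.mem_univ, true_and] at ht
        rw [← hvs] at ht
        simpa [vertSet] using ht
      rw [hz, zero_add]
      congr 1
      ext t
      simp [Finset.mem_compl]
    have hcast : ((L - v : ℕ) : ℤ) = (L : ℤ) - v := by
      rw [Nat.cast_sub hvL]
    rw [hsplit, Finset.sum_congr rfl hdx, sum_ite_bool, hcompl]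
    constructor
    · intro h; omega
    · intro h; omega
  have E1 : {u : Fin L → Stp // (X u L = 1 ∧ vc u = v) ∧ vertSet u = Sf}
      ≃ {f : Fin L → Bool // (Sfᶜ.filter (fun t => f t = true)).card = e} := by
    refine ⟨fun u => ⟨fun t => posb (u.1 t), ?_⟩, fun f => ⟨dec Sf f.1, ?_⟩, ?_, ?_⟩
    · exact (key u.1 u.2.2).1 u.2.1.1
    · have hvs := vertSet_dec Sf f.1
      refine ⟨⟨?_, ?_⟩, hvs⟩
      · apply (key _ hvs).2
        have hfe : Sfᶜ.filter (fun t => posb (dec Sf f.1 t) = true)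
            = Sfᶜ.filter (fun t => f.1 t = true) := by
          apply Finset.filter_congr
          intro t ht
          have h1 : t ∉ Sf := Finset.mem_compl.1 ht
          by_cases hf : f.1 t <;> simp [dec, h1, hf, posb]
        rw [hfe]
        exact f.2
      · rw [vc_eq_vertSet_card, hvs, hS]
    · intro u
      apply Subtype.ext
      funext t
      have hvs := u.2.2
      show dec Sf (fun s => posb (u.1 s)) t = u.1 t
      by_cases h : t ∈ Sf
      · have h1 : dx (u.1 t) = 0 := by
          rw [← hvs] at h
          simpa [vertSet] using h
        have h2 : dec Sf (fun s => posb (u.1 s)) t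
            = if posb (u.1 t) then N else Stp.S := by simp [dec, h]
        rw [h2]
        cases hc : u.1 t with
        | E => exfalso; rw [hc] at h1; simp [dx] at h1
        | W => exfalso; rw [hc] at h1; simp [dx] at h1
        | N => simp [posb]
        | S => simp [posb]
      · have h1 : ¬ dx (u.1 t) = 0 := by
          rw [← hvs] at h
          simpa [vertSet] using h
        have h2 : dec Sf (fun s => posb (u.1 s)) t
            = if posb (u.1 t) then E else W := by simp [dec, h]
        rw [h2]
        cases hc : u.1 t with
        | E => simp [posb]
        | W => simp [posb]
        | N => exfalso; rw [hc] at h1; simp [dx] at h1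
        | S => exfalso; rw [hc] at h1; simp [dx] at h1
    · intro f
      apply Subtype.ext
      funext t
      by_cases h : t ∈ Sf <;> by_cases hf : f.1 t <;> simp [dec, h, hf, posb]
  have E2 : {f : Fin L → Bool // (Sfᶜ.filter (fun t => f t = true)).card = e}
      ≃ {A : Finset (Fin L) // A ∈ Sf.powerset} ×
        {B : Finset (Fin L) // B ∈ Finset.powersetCard e Sfᶜ} := by
    refine ⟨fun f => (⟨Sf.filter (fun t => f.1 t = true), ?_⟩,
        ⟨Sfᶜ.filter (fun t => f.1 t = true), ?_⟩),
      fun p => ⟨fun t => decide (t ∈ p.1.1 ∪ p.2.1), ?_⟩, ?_, ?_⟩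
    · exact Finset.mem_powerset.2 (Finset.filter_subset _ _)
    · exact Finset.mem_powersetCard.2 ⟨Finset.filter_subset _ _, f.2⟩
    · obtain ⟨hB, hBc⟩ := Finset.mem_powersetCard.1 p.2.2
      have hA := Finset.mem_powerset.1 p.1.2
      have : Sfᶜ.filter (fun t => decide (t ∈ p.1.1 ∪ p.2.1) = true) = p.2.1 := by
        ext x
        simp only [Finset.mem_filter, decide_eq_true_eq, Finset.mem_union, Finset.mem_compl]
        constructor
        · rintro ⟨hx, hx2 | hx2⟩
          · exact absurd (hA hx2) hx
          · exact hx2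
        · intro hx
          exact ⟨Finset.mem_compl.1 (hB hx), Or.inr hx⟩
      rw [this, hBc]
    · intro f
      apply Subtype.ext
      funext t
      by_cases hf : f.1 t <;>
        simp [hf, Finset.mem_union, Finset.mem_filter, Finset.mem_compl] <;>
        tauto
    · intro p
      obtain ⟨hB, hBc⟩ := Finset.mem_powersetCard.1 p.2.2
      have hA := Finset.mem_powerset.1 p.1.2
      have hd : ∀ x, x ∈ p.1.1 → x ∉ p.2.1 := by
        intro x hx hx2
        exact (Finset.mem_compl.1 (hB hx2)) (hA hx)
      refine Prod.ext (Subtype.ext ?_) (Subtype.ext ?_)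
      · show Sf.filter (fun t => decide (t ∈ p.1.1 ∪ p.2.1) = true) = p.1.1
        ext x
        simp only [Finset.mem_filter, decide_eq_true_eq, Finset.mem_union]
        constructor
        · rintro ⟨hx, hx2 | hx2⟩
          · exact hx2
          · exact absurd hx (Finset.mem_compl.1 (hB hx2))
        · intro hx
          exact ⟨hA hx, Or.inl hx⟩
      · show Sfᶜ.filter (fun t => decide (t ∈ p.1.1 ∪ p.2.1) = true) = p.2.1
        ext x
        simp only [Finset.mem_filter, decide_eq_true_eq, Finset.mem_union, Finset.mem_compl]
        constructor
        · rintro ⟨hx, hx2 | hx2⟩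
          · exact absurd (hA hx2) hx
          · exact hx2
        · intro hx
          exact ⟨Finset.mem_compl.1 (hB hx), Or.inr hx⟩
  rw [Nat.card_congr (E1.trans E2), Nat.card_prod, Nat.card_eq_fintype_card,
    Nat.card_eq_fintype_card, Fintype.card_coe, Fintype.card_coe,
    Finset.card_powerset, Finset.card_powersetCard, hS, hcompl]

end SlitAux

namespace SlitAux
open Stp Finset
variable {L : ℕ}

lemma card_B (v e : ℕ) (hve : L + 1 = v + 2*e) :
    Nat.card {u : Fin L → Stp // X u L = 1 ∧ vc u = v}
      = L.choose v * (2^v * (L - v).choose e) := by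
  rw [Nat.card_eq_fintype_card, Fintype.card_subtype]
  rw [Finset.card_eq_sum_card_fiberwise
    (f := fun u => vertSet u) (t := Finset.powersetCard v Finset.univ)
    (by
      intro u hu
      simp only [Finset.coe_filter, Finset.mem_univ, true_and, Set.mem_setOf_eq] at hu
      rw [Finset.mem_coe, Finset.mem_powersetCard_univ, ← vc_eq_vertSet_card]
      exact hu.2)]
  have hterm : ∀ Sf ∈ Finset.powersetCard v (Finset.univ : Finset (Fin L)),
      ((Finset.univ.filter (fun u : Fin L → Stp => X u L = 1 ∧ vc u = v)).filter
        (fun u => vertSet u = Sf)).card = 2^v * (L - v).choose e := by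
    intro Sf hSf
    have hS : Sf.card = v := Finset.mem_powersetCard_univ.1 hSf
    rw [Finset.filter_filter, ← Fintype.card_subtype, ← Nat.card_eq_fintype_card]
    exact card_fiber v e hve Sf hS
  rw [Finset.sum_congr rfl hterm, Finset.sum_const, Finset.card_powersetCard,
    Finset.card_univ, Fintype.card_fin, smul_eq_mul]

def bits : Stp → Bool × Bool
  | E => (true, true) | W => (false, false) | N => (true, false) | S => (false, true)

def unbits : Bool → Bool → Stp
  | true, true => E | false, false => W | true, false => N | false, true => S

lemma count_ones (u : Fin L → Stp) :
    (((Finset.univ : Finset (Fin L × Bool)).filter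
      (fun x => (if x.2 then (bits (u x.1)).1 else (bits (u x.1)).2) = true)).card : ℤ)
    = L + X u L := by
  rw [Finset.card_filter]
  push_cast
  rw [Fintype.sum_prod_type]
  have hterm : ∀ t : Fin L,
      (∑ b : Bool, (if (if b then (bits (u t)).1 else (bits (u t)).2) = true then (1:ℤ) else 0))
        = 1 + dx (u t) := by
    intro t
    rw [Fintype.sum_bool]
    cases u t <;> simp [bits, dx]
  rw [Finset.sum_congr rfl (fun t _ => hterm t), Finset.sum_add_distrib,
    Finset.sum_const, Finset.card_univ, Fintype.card_fin, ← X_L_eq]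
  push_cast
  ring

lemma bits_unbits (a b : Bool) : bits (unbits a b) = (a, b) := by
  cases a <;> cases b <;> rfl

lemma card_Btot : Nat.card {u : Fin L → Stp // X u L = 1} = (2*L).choose (L+1) := by
  have eqv : {u : Fin L → Stp // X u L = 1} ≃
      {F : Fin L × Bool → Bool //
        ((Finset.univ.filter (fun x => F x = true)).card = L + 1)} := by
    refine ⟨fun u => ⟨fun x => if x.2 then (bits (u.1 x.1)).1 else (bits (u.1 x.1)).2, ?_⟩,
      fun F => ⟨fun t => unbits (F.1 (t, true)) (F.1 (t, false)), ?_⟩, ?_, ?_⟩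
    · have := count_ones u.1
      rw [u.2] at this
      have h2 : (((Finset.univ : Finset (Fin L × Bool)).filter
          (fun x => (if x.2 then (bits (u.1 x.1)).1 else (bits (u.1 x.1)).2) = true)).card : ℤ)
          = ((L + 1 : ℕ) : ℤ) := by
        rw [this]; push_cast; ring
      exact_mod_cast h2
    · set u' : Fin L → Stp := fun t => unbits (F.1 (t, true)) (F.1 (t, false)) with hu'
      have henc : ∀ x : Fin L × Bool,
          (if x.2 then (bits (u' x.1)).1 else (bits (u' x.1)).2) = F.1 x := by
        intro x
        obtain ⟨t, b⟩ := x
        rw [hu']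
        cases b <;> simp [bits_unbits]
      have h1 := count_ones u'
      have hset : (Finset.univ.filter
          (fun x : Fin L × Bool =>
            (if x.2 then (bits (u' x.1)).1 else (bits (u' x.1)).2) = true))
          = Finset.univ.filter (fun x => F.1 x = true) := by
        apply Finset.filter_congr
        intro x _
        rw [henc x]
      rw [hset, F.2] at h1
      have : (X u' L : ℤ) = 1 := by push_cast at h1; linarith
      exact this
    · intro u
      apply Subtype.ext
      funext t
      show unbits (bits (u.1 t)).1 (bits (u.1 t)).2 = u.1 t
      cases u.1 t <;> rfl
    · intro F
      apply Subtype.ext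
      funext x
      obtain ⟨t, b⟩ := x
      show (if b then (bits (unbits (F.1 (t,true)) (F.1 (t,false)))).1
        else (bits (unbits (F.1 (t,true)) (F.1 (t,false)))).2) = F.1 (t, b)
      cases b <;> simp [bits_unbits]
  rw [Nat.card_congr eqv, card_boolfun, Fintype.card_prod, Fintype.card_fin,
    Fintype.card_bool, mul_comm L 2]

lemma vc_even (hO : Odd L) (u : Fin L → Stp) (hX : X u L = 1) : Even (vc u) := by
  have h1 : ∀ t : Fin L,
      Even (dx (u t) + (if dx (u t) = 0 then (1:ℤ) else 0) + 1) := by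
    intro t
    cases u t <;> simp [dx] <;> decide
  have h2 : Even (∑ t : Fin L, (dx (u t) + (if dx (u t) = 0 then (1:ℤ) else 0) + 1)) :=
    Finset.even_sum _ (fun t _ => h1 t)
  have h3 : ∑ t : Fin L, (dx (u t) + (if dx (u t) = 0 then (1:ℤ) else 0) + 1)
      = X u L + (vc u : ℤ) + L := by
    rw [Finset.sum_add_distrib, Finset.sum_add_distrib, Finset.sum_const,
      Finset.card_univ, Fintype.card_fin, ← X_L_eq]
    have h4 : (vc u : ℤ) = ∑ t : Fin L, (if dx (u t) = 0 then (1:ℤ) else 0) := by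
      rw [vc_eq_sum]
      push_cast
      rfl
    rw [← h4]
    push_cast
    ring
  rw [h3, hX] at h2
  obtain ⟨m, hm⟩ := hO
  have h5 : (L : ℤ) = 2*m + 1 := by exact_mod_cast hm
  rw [h5] at h2
  obtain ⟨c, hc⟩ := h2
  have h6 : (vc u : ℤ) = 2 * (c - m - 1) := by linarith
  have h7 : Even (vc u : ℤ) := ⟨c - m - 1, by linarith⟩
  exact_mod_cast h7

lemma partitionB (n : ℕ) :
    ((Finset.univ : Finset (Fin (2*n+1) → Stp)).filter
        (fun u => X u (2*n+1) = 1)).card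
      = ∑ k ∈ Finset.range (n+1),
        ((Finset.univ : Finset (Fin (2*n+1) → Stp)).filter
          (fun u => X u (2*n+1) = 1 ∧ vc u = 2*k)).card := by
  rw [Finset.card_eq_sum_card_fiberwise
    (f := fun u => vc u / 2) (t := Finset.range (n+1))
    (by
      intro u hu
      have h1 : vc u ≤ 2*n+1 := by
        rw [vc]
        calc (Finset.univ.filter (fun t => dx (u t) = 0)).card
            ≤ (Finset.univ : Finset (Fin (2*n+1))).card := Finset.card_filter_le _ _
        _ = 2*n+1 := by rw [Finset.card_univ, Fintype.card_fin]
      rw [Finset.mem_coe, Finset.mem_range]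
      show vc u / 2 < n + 1
      omega)]
  refine Finset.sum_congr rfl (fun k hk => ?_)
  rw [Finset.filter_filter]
  refine congrArg Finset.card (Finset.filter_congr ?_)
  intro u _
  show (X u (2*n+1) = 1 ∧ vc u / 2 = k) ↔ (X u (2*n+1) = 1 ∧ vc u = 2*k)
  constructor
  · rintro ⟨hX, hdiv⟩
    refine ⟨hX, ?_⟩
    have he : Even (vc u) := vc_even ⟨n, by ring⟩ u hX
    obtain ⟨c, hc⟩ := he
    omega
  · rintro ⟨hX, hvc⟩
    exact ⟨hX, by omega⟩

lemma arith1 (n k : ℕ) (hk : k ≤ n) :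
    (2*n+1).choose (2*k) * (2^(2*k) * (2*n+1 - 2*k).choose (n-k+1))
      = (2*n+1) * ((2*n).choose (2*k) * 2^(2*k) * catalan (n-k)) := by
  set m := n - k with hm
  have h0 : 2*n+1 - 2*k = 2*m+1 := by omega
  rw [h0]
  have hcore : (2*n+1).choose (2*k) * (2*m+1).choose (m+1)
      = (2*n+1) * ((2*n).choose (2*k) * catalan m) := by
    apply Nat.eq_of_mul_eq_mul_left (show 0 < m + 1 by omega)
    have h1 : (m+1) * catalan m = Nat.centralBinom m := succ_mul_catalan_eq_centralBinom m
    have h2 : (2*m+1) * (2*m).choose m = (2*m+1).choose (m+1) * (m+1) := by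
      have := Nat.add_one_mul_choose_eq (2*m) m
      simpa using this
    have h3 : (2*n).choose (2*k) * (2*n+1) = (2*n+1).choose (2*k) * (2*m+1) := by
      have hq := Nat.choose_mul_succ_eq (2*n) (2*k)
      rw [hq]
      have hr : 2*n+1-2*k = 2*m+1 := by omega
      rw [hr]
    have hcb : Nat.centralBinom m = (2*m).choose m := rfl
    calc (m+1) * ((2*n+1).choose (2*k) * (2*m+1).choose (m+1))
        = (2*n+1).choose (2*k) * ((2*m+1).choose (m+1) * (m+1)) := by ring
      _ = (2*n+1).choose (2*k) * ((2*m+1) * (2*m).choose m) := by rw [h2]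
      _ = ((2*n+1).choose (2*k) * (2*m+1)) * (2*m).choose m := by ring
      _ = ((2*n).choose (2*k) * (2*n+1)) * (2*m).choose m := by rw [← h3]
      _ = (2*n+1) * ((2*n).choose (2*k) * (2*m).choose m) := by ring
      _ = (2*n+1) * ((2*n).choose (2*k) * ((m+1) * catalan m)) := by rw [h1, hcb]
      _ = (m+1) * ((2*n+1) * ((2*n).choose (2*k) * catalan m)) := by ring
  calc (2*n+1).choose (2*k) * (2^(2*k) * (2*m+1).choose (m+1))
      = ((2*n+1).choose (2*k) * (2*m+1).choose (m+1)) * 2^(2*k) := by ring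
    _ = ((2*n+1) * ((2*n).choose (2*k) * catalan m)) * 2^(2*k) := by rw [hcore]
    _ = (2*n+1) * ((2*n).choose (2*k) * 2^(2*k) * catalan m) := by ring

lemma arith2 (n : ℕ) :
    (2*(2*n+1)).choose ((2*n+1)+1) = (2*n+1) * catalan (2*n+1) := by
  set N := 2*n+1 with hN
  have hN1 : 1 ≤ N := by omega
  apply Nat.eq_of_mul_eq_mul_left (show 0 < N + 1 by omega)
  have h1 : (N+1) * catalan N = Nat.centralBinom N := succ_mul_catalan_eq_centralBinom N
  have h2 : 2*N * (2*N-1).choose N = (2*N).choose (N+1) * (N+1) := by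
    have := Nat.add_one_mul_choose_eq (2*N-1) N
    have he : (2*N-1) + 1 = 2*N := by omega
    rw [he] at this
    exact this
  have h3 : (2*N).choose N = 2 * (2*N-1).choose N := by
    have hp : (2*N-1) + 1 = 2*N := by omega
    have hq : (N-1) + 1 = N := by omega
    have hpascal := Nat.choose_succ_succ (2*N-1) (N-1)
    simp only [Nat.succ_eq_add_one] at hpascal
    rw [hq, hp] at hpascal
    have hsymm : (2*N-1).choose (N-1) = (2*N-1).choose N := by
      have h5 : (2*N-1) - N = N - 1 := by omega
      have h6 := Nat.choose_symm (show N ≤ 2*N-1 by omega)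
      rw [h5] at h6
      exact h6
    rw [hpascal, hsymm]
    ring
  have hcb : Nat.centralBinom N = (2*N).choose N := rfl
  calc (N+1) * ((2*N).choose (N+1)) = 2*N * (2*N-1).choose N := by
        rw [mul_comm]; exact h2.symm
    _ = N * (2 * (2*N-1).choose N) := by ring
    _ = N * ((2*N).choose N) := by rw [← h3]
    _ = N * ((N+1) * catalan N) := by rw [h1, hcb]
    _ = (N+1) * (N * catalan N) := by ring

end SlitAux

open SlitAux

/-- the number of walks on the slit plane of length `2n+1` ending at
`(1,0)` with exactly `2k` vertical steps is `binom(2n,2k)·2^{2k}·C_{n−k}`; in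
particular these numbers sum to `C_{2n+1}`. -/
theorem slit_count_1_0_vertical (n : ℕ) :
    (∀ k : ℕ, k ≤ n →
      slitCountVert sqSteps 1 0 (2 * n + 1) (2 * k)
        = Nat.choose (2 * n) (2 * k) * 2 ^ (2 * k) * catalan (n - k))
    ∧ ∑ k ∈ Finset.range (n + 1),
        Nat.choose (2 * n) (2 * k) * 2 ^ (2 * k) * catalan (n - k)
      = catalan (2 * n + 1) := by
  have hO : Odd (2*n+1) := ⟨n, by ring⟩
  haveI : NeZero (2*n+1) := ⟨by omega⟩
  have hpos : 0 < 2*n+1 := by omega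
  -- counting words with fixed vertical count
  have hBk : ∀ k : ℕ, k ≤ n →
      Nat.card {u : Fin (2*n+1) → Stp // X u (2*n+1) = 1 ∧ vc u = 2*k}
        = (2*n+1) * ((2*n).choose (2*k) * 2^(2*k) * catalan (n-k)) := by
    intro k hk
    have hve : (2*n+1) + 1 = 2*k + 2*(n-k+1) := by omega
    rw [card_B (2*k) (n-k+1) hve]
    exact arith1 n k hk
  -- the rotation bijection
  have hmain : ∀ v : ℕ,
      Nat.card {u : Fin (2*n+1) → Stp // X u (2*n+1) = 1 ∧ vc u = v}
        = Nat.card {w : Fin (2*n+1) → Stp // SlitW w ∧ vc w = v} * (2*n+1) := by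
    intro v
    rw [Nat.card_congr (mainEquiv v hO), Nat.card_prod, Nat.card_eq_fintype_card
      (α := Fin (2*n+1)), Fintype.card_fin]
  -- bridge to the original definition
  have hslit : ∀ v : ℕ, slitCountVert sqSteps 1 0 (2*n+1) v
      = Nat.card {w : Fin (2*n+1) → Stp // SlitW w ∧ vc w = v} := by
    intro v
    exact Nat.card_congr (bridgeEquiv (2*n+1) v)
  have part1 : ∀ k : ℕ, k ≤ n →
      slitCountVert sqSteps 1 0 (2 * n + 1) (2 * k)
        = Nat.choose (2 * n) (2 * k) * 2 ^ (2 * k) * catalan (n - k) := by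
    intro k hk
    apply Nat.eq_of_mul_eq_mul_left hpos
    calc (2*n+1) * slitCountVert sqSteps 1 0 (2*n+1) (2*k)
        = Nat.card {w : Fin (2*n+1) → Stp // SlitW w ∧ vc w = 2*k} * (2*n+1) := by
          rw [hslit (2*k)]; ring
      _ = Nat.card {u : Fin (2*n+1) → Stp // X u (2*n+1) = 1 ∧ vc u = 2*k} :=
          (hmain (2*k)).symm
      _ = (2*n+1) * ((2*n).choose (2*k) * 2^(2*k) * catalan (n-k)) := hBk k hk
  refine ⟨part1, ?_⟩
  -- part 2
  apply Nat.eq_of_mul_eq_mul_left hpos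
  have hcards : ∀ (p : (Fin (2*n+1) → Stp) → Prop) [DecidablePred p],
      Nat.card {u : Fin (2*n+1) → Stp // p u} = (Finset.univ.filter p).card := by
    intro p _
    rw [Nat.card_eq_fintype_card, Fintype.card_subtype]
  calc (2*n+1) * ∑ k ∈ Finset.range (n + 1),
        Nat.choose (2 * n) (2 * k) * 2 ^ (2 * k) * catalan (n - k)
      = ∑ k ∈ Finset.range (n + 1),
          (2*n+1) * ((2*n).choose (2*k) * 2^(2*k) * catalan (n-k)) := by
        rw [Finset.mul_sum]
    _ = ∑ k ∈ Finset.range (n + 1),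
          ((Finset.univ : Finset (Fin (2*n+1) → Stp)).filter
            (fun u => X u (2*n+1) = 1 ∧ vc u = 2*k)).card := by
        refine Finset.sum_congr rfl (fun k hk => ?_)
        rw [← hBk k (by simpa [Nat.lt_succ_iff] using hk), hcards]
    _ = ((Finset.univ : Finset (Fin (2*n+1) → Stp)).filter
          (fun u => X u (2*n+1) = 1)).card := (partitionB n).symm
    _ = Nat.card {u : Fin (2*n+1) → Stp // X u (2*n+1) = 1} := (hcards _).symm
    _ = (2*(2*n+1)).choose ((2*n+1)+1) := card_Btot
    _ = (2*n+1) * catalan (2*n+1) := arith2 n
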